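/- arXiv:1912.00894 — 3 statements merged into one kernel-verified Lean document; each statement's English description precedes it below -/
import Mathlib

section
/- Let d = 1, let V ∈ C²(ℝ) have bounded second derivative with e^{−V} ∈ L¹(ℝ), and let π = Z^{−1} e^{−V} be the target probability density. Let h ∈ C(ℝ) ∩ C¹(ℝ∖{0}) be bounded with bounded derivative, and suppose h(x) → 0 and h'(x) → 0 as x → ±∞. Then lim_{|x|→∞} [ ∫_ℝ V''(y) h(x−y)² dπ(y) + ∫_ℝ h'(x−y)² dπ(y) ] = 0. Consequently, if h(0) > 0, there is no λ > 0 such that ∫_ℝ V''(y) h(x−y)² dπ(y) + ∫_ℝ h'(x−y)² dπ(y) ≥ λ h(0) for all x ∈ ℝ; i.e., exponential convergence near equilibrium fails for the translation-invariant kernel k(x,y) = h(x−y). -/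
open MeasureTheory Real Filter

lemma key_aux {c w ρ : ℝ → ℝ} (hc : Measurable c) (hw : Measurable w)
    (hρm : Measurable ρ) (hρ : Integrable ρ) (hρ0 : ∀ y, 0 ≤ ρ y)
    {Mc Mw : ℝ} (hMc : ∀ y, |c y| ≤ Mc) (hMw : ∀ t, |w t| ≤ Mw)
    {l : Filter ℝ} [l.IsCountablyGenerated]
    (hsub : ∀ y : ℝ, Tendsto (fun x => x - y) l l)
    (hwl : Tendsto w l (nhds 0)) :
    Tendsto (fun x => ∫ y, c y * (w (x - y)) ^ 2 * ρ y) l (nhds 0) := by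
  have h0 : (0 : ℝ) = ∫ (_ : ℝ), (0 : ℝ) := by simp
  rw [h0]
  apply tendsto_integral_filter_of_dominated_convergence (fun y => Mc * Mw ^ 2 * ρ y)
  · filter_upwards with x
    exact ((hc.mul ((hw.comp (measurable_const.sub measurable_id)).pow_const 2)).mul
      hρm).aestronglyMeasurable
  · filter_upwards with x
    filter_upwards with y
    have : |c y * w (x - y) ^ 2 * ρ y| = |c y| * |w (x - y)| ^ 2 * ρ y := by
      rw [abs_mul, abs_mul, abs_pow, abs_of_nonneg (hρ0 y)]
    rw [Real.norm_eq_abs, this]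
    exact mul_le_mul_of_nonneg_right
      (mul_le_mul (hMc y) (pow_le_pow_left₀ (abs_nonneg _) (hMw _) 2)
        (pow_nonneg (abs_nonneg _) 2) ((abs_nonneg _).trans (hMc y))) (hρ0 y)
  · exact (hρ.const_mul _)
  · filter_upwards with y
    have : Tendsto (fun x => c y * (w (x - y)) ^ 2 * ρ y) l
        (nhds (c y * (0 : ℝ) ^ 2 * ρ y)) :=
      (tendsto_const_nhds.mul ((hwl.comp (hsub y)).pow 2)).mul tendsto_const_nhds
    simpa using this

/-- no exponential convergence near equilibrium for bounded
translation-invariant kernels with decaying tails, in dimension one. -/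
theorem stmt_10
    (V : ℝ → ℝ) (hV : ContDiff ℝ 2 V)
    (hV'' : ∃ M, ∀ x, |deriv (deriv V) x| ≤ M)
    (hVint : Integrable fun x => exp (-V x))
    (Z : ℝ) (hZ : Z = ∫ x, exp (-V x))
    (piD : ℝ → ℝ) (hpiD : ∀ x, piD x = exp (-V x) / Z)
    -- `h ∈ C(ℝ) ∩ C¹(ℝ∖{0})`, bounded with bounded derivative
    (h : ℝ → ℝ)
    (hc : Continuous h)
    (hc1 : ContDiffOn ℝ 1 h {(0 : ℝ)}ᶜ)
    (hbdd : ∃ M, (∀ x, |h x| ≤ M) ∧ ∀ x, |deriv h x| ≤ M)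
    -- `h(x) → 0` and `h'(x) → 0` as `x → ±∞`
    (hlim1 : Tendsto h atTop (nhds 0)) (hlim2 : Tendsto h atBot (nhds 0))
    (hlim3 : Tendsto (deriv h) atTop (nhds 0)) (hlim4 : Tendsto (deriv h) atBot (nhds 0)) :
    -- the near-equilibrium curvature functional at `φ_x = h(x − ·)` tends to 0
    (Tendsto
        (fun x => (∫ y, deriv (deriv V) y * (h (x - y)) ^ 2 * piD y)
          + ∫ y, (deriv h (x - y)) ^ 2 * piD y) atTop (nhds 0)
      ∧ Tendsto
          (fun x => (∫ y, deriv (deriv V) y * (h (x - y)) ^ 2 * piD y)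
            + ∫ y, (deriv h (x - y)) ^ 2 * piD y) atBot (nhds 0))
    -- hence no uniform lower bound `λ h(0)` with `λ > 0` is possible
    ∧ (0 < h 0 →
        ¬ ∃ lam : ℝ, 0 < lam ∧
            ∀ x, lam * h 0
              ≤ (∫ y, deriv (deriv V) y * (h (x - y)) ^ 2 * piD y)
                + ∫ y, (deriv h (x - y)) ^ 2 * piD y) := by
  obtain ⟨MV, hMV⟩ := hV''
  obtain ⟨Mh, hMh, hMh'⟩ := hbdd
  have hZpos : 0 < Z := by
    rw [hZ]
    exact integral_exp_pos hVint
  have hpe : piD = fun y => exp (-V y) / Z := funext hpiD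
  have hρm : Measurable piD := by
    rw [hpe]; exact (hV.continuous.neg.rexp.measurable).div_const Z
  have hρint : Integrable piD := by
    rw [hpe]; exact hVint.div_const Z
  have hρ0 : ∀ y, 0 ≤ piD y := fun y => by
    rw [hpiD]; exact div_nonneg (exp_pos _).le hZpos.le
  have hcm : Measurable (deriv (deriv V)) := measurable_deriv _
  have hsubT : ∀ y : ℝ, Tendsto (fun x : ℝ => x - y) atTop atTop :=
    fun y => tendsto_atTop_add_const_right atTop (-y) tendsto_id |>.congr
      (fun x => by simp only [id_eq]; ring)
  have hsubB : ∀ y : ℝ, Tendsto (fun x : ℝ => x - y) atBot atBot :=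
    fun y => tendsto_atBot_add_const_right atBot (-y) tendsto_id |>.congr
      (fun x => by simp only [id_eq]; ring)
  have hone : ∀ y : ℝ, |(fun _ : ℝ => (1:ℝ)) y| ≤ 1 := fun y => by simp
  have T2T : Tendsto (fun x => ∫ y, (deriv h (x - y)) ^ 2 * piD y) atTop (nhds 0) := by
    have := key_aux (c := fun _ => (1:ℝ)) measurable_const (measurable_deriv h)
      hρm hρint hρ0 hone hMh' hsubT hlim3
    simpa using this
  have T2B : Tendsto (fun x => ∫ y, (deriv h (x - y)) ^ 2 * piD y) atBot (nhds 0) := by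
    have := key_aux (c := fun _ => (1:ℝ)) measurable_const (measurable_deriv h)
      hρm hρint hρ0 hone hMh' hsubB hlim4
    simpa using this
  have T1T : Tendsto (fun x => ∫ y, deriv (deriv V) y * (h (x - y)) ^ 2 * piD y)
      atTop (nhds 0) :=
    key_aux hcm hc.measurable hρm hρint hρ0 hMV hMh hsubT hlim1
  have T1B : Tendsto (fun x => ∫ y, deriv (deriv V) y * (h (x - y)) ^ 2 * piD y)
      atBot (nhds 0) :=
    key_aux hcm hc.measurable hρm hρint hρ0 hMV hMh hsubB hlim2
  have hTT : Tendsto (fun x => (∫ y, deriv (deriv V) y * (h (x - y)) ^ 2 * piD y)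
      + ∫ y, (deriv h (x - y)) ^ 2 * piD y) atTop (nhds 0) := by
    simpa using T1T.add T2T
  have hTB : Tendsto (fun x => (∫ y, deriv (deriv V) y * (h (x - y)) ^ 2 * piD y)
      + ∫ y, (deriv h (x - y)) ^ 2 * piD y) atBot (nhds 0) := by
    simpa using T1B.add T2B
  refine ⟨⟨hTT, hTB⟩, ?_⟩
  rintro h0pos ⟨lam, hlam, hall⟩
  have hpos : (0:ℝ) < lam * h 0 := mul_pos hlam h0pos
  obtain ⟨x, hx⟩ := (hTT.eventually_lt_const hpos).exists
  exact absurd (hall x) (not_le.mpr hx)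
end

section
/- Let d = 1, V ∈ C²(ℝ) with bounded second derivative and e^{−V} ∈ L¹(ℝ), Z = ∫ e^{−V} dx, π = Z^{−1} e^{−V}, and suppose there exists λ̃ > 0 such that V''(x) + (V'(x))²/2 ≥ λ̃ for all x ∈ ℝ. Then for every f ∈ C_c^∞(ℝ): ∫_ℝ [ V''(x) (π(x)^{−1/2} f(x))² + ( (π^{−1/2} f)'(x) )² ] π(x) dx ≥ min(1, λ̃/2) ∫_ℝ [ f(x)² + (f'(x))² ] dx. -/
private lemma hcs_div_aux {g : ℝ → ℝ} (h : HasCompactSupport g) (c : ℝ) :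
    HasCompactSupport (fun x => g x / c) := by
  simpa [Pi.mul_def, div_eq_mul_inv] using h.mul_right (f' := fun _ => c⁻¹)


open MeasureTheory Real

/-- exponential decay near equilibrium for the weighted Matérn
kernel. If `V'' + (V')²/2 ≥ λ̃ > 0`, then for every `f ∈ C_c^∞(ℝ)` the curvature
functional dominates `min(1, λ̃/2)` times the `H¹(ℝ)`-norm of `f` squared. -/
theorem stmt_12
    (V : ℝ → ℝ) (hV : ContDiff ℝ 2 V)
    (hV'' : ∃ M, ∀ x, |deriv (deriv V) x| ≤ M)
    (hVint : Integrable fun x => exp (-V x))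
    (Z : ℝ) (hZ : Z = ∫ x, exp (-V x))
    (piD : ℝ → ℝ) (hpiD : ∀ x, piD x = exp (-V x) / Z)
    (lamt : ℝ) (hlamt : 0 < lamt)
    (hBE : ∀ x, lamt ≤ deriv (deriv V) x + (deriv V x) ^ 2 / 2) :
    ∀ f : ℝ → ℝ, ContDiff ℝ (⊤ : ℕ∞) f → HasCompactSupport f →
      min 1 (lamt / 2) * ∫ x, ((f x) ^ 2 + (deriv f x) ^ 2)
        ≤ ∫ x, (deriv (deriv V) x * (f x / Real.sqrt (piD x)) ^ 2
            + (deriv (fun y => f y / Real.sqrt (piD y)) x) ^ 2) * piD x := by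
  intro f hf hfc
  have hZpos : 0 < Z := by
    rw [hZ]; exact integral_exp_pos hVint
  -- regularity
  have hVd : Differentiable ℝ V := hV.differentiable (by norm_num)
  have hV1 : ContDiff ℝ 1 (deriv V) := by
    have : ContDiff ℝ ((1 : ℕ) + 1) V := by exact_mod_cast hV
    exact (contDiff_succ_iff_deriv.mp this).2.2
  have hud : Differentiable ℝ (deriv V) := hV1.differentiable one_ne_zero
  have huc : Continuous (deriv V) := hud.continuous
  have hwc : Continuous (deriv (deriv V)) := hV1.continuous_deriv le_rfl
  have hfd : Differentiable ℝ f := hf.differentiable (by norm_num)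
  have hfC : Continuous f := hfd.continuous
  have hf1 : ContDiff ℝ 1 f := hf.of_le (by norm_num)
  have hf'c : Continuous (deriv f) := hf1.continuous_deriv le_rfl
  have hf'cs : HasCompactSupport (deriv f) := hfc.deriv
  set u := deriv V with hu
  set w := deriv (deriv V) with hw
  set φ : ℝ → ℝ := fun x => deriv f x + f x * u x / 2 with hφ
  -- description of g
  have hsq : ∀ y, Real.sqrt (piD y) = exp (-(V y) / 2) / Real.sqrt Z := by
    intro y
    rw [hpiD, Real.sqrt_div (exp_nonneg _)]
    congr 1
    rw [show exp (-V y) = exp (-(V y) / 2) ^ 2 by rw [sq, ← Real.exp_add]; ring_nf]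
    exact Real.sqrt_sq (exp_nonneg _)
  have hgeq : (fun y => f y / Real.sqrt (piD y))
      = fun y => f y * Real.sqrt Z * exp (V y / 2) := by
    funext y
    rw [hsq y, div_div_eq_mul_div, mul_comm (f y) (Real.sqrt Z),
      div_eq_iff (exp_ne_zero _)]
    rw [mul_assoc, mul_assoc, ← Real.exp_add]
    ring_nf
    simp
  have hgd : ∀ x, HasDerivAt (fun y => f y * Real.sqrt Z * exp (V y / 2))
      (φ x * Real.sqrt Z * exp (V x / 2)) x := by
    intro x
    have h1 : HasDerivAt (fun y => f y * Real.sqrt Z) (deriv f x * Real.sqrt Z) x :=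
      (hfd x).hasDerivAt.mul_const _
    have h2 : HasDerivAt (fun y => exp (V y / 2)) (exp (V x / 2) * (u x / 2)) x := by
      exact ((hVd x).hasDerivAt.div_const 2).exp
    have := h1.mul h2
    refine this.congr_deriv ?_
    simp only [hφ]; ring
  have hgderiv : ∀ x, deriv (fun y => f y / Real.sqrt (piD y)) x
      = φ x * Real.sqrt Z * exp (V x / 2) := by
    intro x
    rw [hgeq]
    exact (hgd x).deriv
  -- pointwise identity for the right-hand integrand
  have key : ∀ x, (w x * (f x / Real.sqrt (piD x)) ^ 2
      + (deriv (fun y => f y / Real.sqrt (piD y)) x) ^ 2) * piD x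
      = w x * f x ^ 2 + φ x ^ 2 := by
    intro x
    have hπpos : 0 < piD x := by
      rw [hpiD]; positivity
    have hE : Real.sqrt Z ^ 2 = Z := Real.sq_sqrt hZpos.le
    have hEp : exp (V x / 2) ^ 2 * piD x = 1 / Z := by
      rw [hpiD, sq, ← Real.exp_add]
      rw [show V x / 2 + V x / 2 = V x by ring]
      rw [mul_div_assoc', ← Real.exp_add]
      simp
    have h1 : (f x / Real.sqrt (piD x)) ^ 2 = f x ^ 2 / piD x := by
      rw [div_pow, Real.sq_sqrt hπpos.le]
    rw [hgderiv x, h1]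
    have expand : ∀ p F W P S E : ℝ, p ≠ 0 →
        (W * (F ^ 2 / p) + (P * S * E) ^ 2) * p
        = W * F ^ 2 * (p / p) + P ^ 2 * S ^ 2 * (E ^ 2 * p) := by
      intro p F W P S E hp
      field_simp
    rw [expand _ _ _ _ _ _ hπpos.ne', div_self hπpos.ne', hE, hEp]
    field_simp
  -- rewrite the RHS integral
  rw [show (fun x => (w x * (f x / Real.sqrt (piD x)) ^ 2
      + (deriv (fun y => f y / Real.sqrt (piD y)) x) ^ 2) * piD x)
      = fun x => w x * f x ^ 2 + φ x ^ 2 from funext key]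
  -- integrability of the pieces
  have hsupp : ∀ g : ℝ → ℝ, Continuous g →
      Integrable (fun x => g x * f x) ∧ True := by
    intro g hg
    constructor
    · exact (hg.mul hfC).integrable_of_hasCompactSupport
        (by simpa [Pi.mul_def] using (hfc.mul_left (f := g)))
    · trivial
  have hcs2 : HasCompactSupport (fun x => f x ^ 2) := by
    simpa [Pi.mul_def, sq] using (hfc.mul_left (f := f))
  have Iwf2 : Integrable (fun x => w x * f x ^ 2) :=
    (hwc.mul (hfC.pow 2)).integrable_of_hasCompactSupport
      (by simpa [Pi.mul_def] using (hcs2.mul_left (f := w)))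
  have If2 : Integrable (fun x => f x ^ 2) :=
    (hfC.pow 2).integrable_of_hasCompactSupport hcs2
  have If'2 : Integrable (fun x => deriv f x ^ 2) :=
    (hf'c.pow 2).integrable_of_hasCompactSupport
      (by simpa [Pi.mul_def, sq] using (hf'cs.mul_left (f := deriv f)))
  have Iφ2 : Integrable (fun x => φ x ^ 2) := by
    have hφc : Continuous φ := hf'c.add ((hfC.mul huc).div_const 2)
    have hφcs : HasCompactSupport φ := by
      apply HasCompactSupport.add hf'cs
      exact hcs_div_aux
        (by simpa [Pi.mul_def] using (hfc.mul_right (f' := u))) 2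
    exact (hφc.pow 2).integrable_of_hasCompactSupport
      (by simpa [Pi.mul_def, sq] using (hφcs.mul_left (f := φ)))
  have Imid : Integrable (fun x => f x ^ 2 * (w x / 2 + u x ^ 2 / 4)) := by
    have hc : Continuous fun x => f x ^ 2 * (w x / 2 + u x ^ 2 / 4) :=
      (hfC.pow 2).mul ((hwc.div_const 2).add ((huc.pow 2).div_const 4))
    exact hc.integrable_of_hasCompactSupport
      (by simpa [Pi.mul_def] using (hcs2.mul_right (f' := fun x => w x / 2 + u x ^ 2 / 4)))
  have Ibd : Integrable (fun x => f x * deriv f x * u x + f x ^ 2 * w x / 2) := by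
    have hc : Continuous fun x => f x * deriv f x * u x + f x ^ 2 * w x / 2 :=
      ((hfC.mul hf'c).mul huc).add (((hfC.pow 2).mul hwc).div_const 2)
    apply hc.integrable_of_hasCompactSupport
    apply HasCompactSupport.add
    · simpa [Pi.mul_def] using
        ((by simpa [Pi.mul_def] using (hfc.mul_right (f' := deriv f)) :
          HasCompactSupport fun x => f x * deriv f x).mul_right (f' := u))
    · exact hcs_div_aux
        (by simpa [Pi.mul_def] using (hcs2.mul_right (f' := w))) 2
  -- integration by parts: ∫ (f² u)' = 0
  have IBP : ∫ x, (f x * deriv f x * u x + f x ^ 2 * w x / 2) = 0 := by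
    have hder : ∀ x, HasDerivAt (fun y => f y ^ 2 * u y / 2)
        (f x * deriv f x * u x + f x ^ 2 * w x / 2) x := by
      intro x
      have h1 : HasDerivAt (fun y => f y ^ 2) (2 * f x * deriv f x) x := by
        have h0 := (hfd x).hasDerivAt.pow 2
        norm_num at h0
        first
        | exact h0
        | · convert h0 using 1
            ring
      have h2 : HasDerivAt u (w x) x := (hud x).hasDerivAt
      have := (h1.mul h2).div_const 2
      refine this.congr_deriv ?_
      ring
    have hInt : Integrable (fun y => f y ^ 2 * u y / 2) := by
      have hc : Continuous fun y => f y ^ 2 * u y / 2 :=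
        ((hfC.pow 2).mul huc).div_const 2
      exact hc.integrable_of_hasCompactSupport
        (hcs_div_aux
          (by simpa [Pi.mul_def] using (hcs2.mul_right (f' := u))) 2)
    exact integral_eq_zero_of_hasDerivAt_of_integrable hder Ibd hInt
  -- split the RHS integral
  have split : ∫ x, (w x * f x ^ 2 + φ x ^ 2)
      = (∫ x, deriv f x ^ 2) + (∫ x, f x ^ 2 * (w x / 2 + u x ^ 2 / 4))
        + ∫ x, (f x * deriv f x * u x + f x ^ 2 * w x / 2) := by
    have funeq : (fun x => w x * f x ^ 2 + φ x ^ 2)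
        = fun x => (deriv f x ^ 2 + f x ^ 2 * (w x / 2 + u x ^ 2 / 4))
          + (f x * deriv f x * u x + f x ^ 2 * w x / 2) := by
      funext x
      simp only [hφ]
      ring
    have IA : Integrable (fun x => deriv f x ^ 2 + f x ^ 2 * (w x / 2 + u x ^ 2 / 4)) :=
      If'2.add Imid
    rw [funeq, integral_add IA Ibd, integral_add If'2 Imid]
  rw [split, IBP, add_zero]
  -- lower bound on the middle term
  have hmid : (lamt / 2) * ∫ x, f x ^ 2 ≤ ∫ x, f x ^ 2 * (w x / 2 + u x ^ 2 / 4) := by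
    rw [← integral_const_mul]
    apply integral_mono (If2.const_mul _) Imid
    intro x
    have h1 := hBE x
    have h2 : (0 : ℝ) ≤ f x ^ 2 := sq_nonneg _
    simp only
    nlinarith [sq_nonneg (f x), hBE x]
  have hInt2 : ∫ x, (f x ^ 2 + deriv f x ^ 2) = (∫ x, f x ^ 2) + ∫ x, deriv f x ^ 2 :=
    integral_add If2 If'2
  rw [hInt2]
  have hf2nn : 0 ≤ ∫ x, f x ^ 2 := integral_nonneg fun x => sq_nonneg _
  have hf'2nn : 0 ≤ ∫ x, deriv f x ^ 2 := integral_nonneg fun x => sq_nonneg _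
  have hm1 : min 1 (lamt / 2) ≤ 1 := min_le_left _ _
  have hm2 : min 1 (lamt / 2) ≤ lamt / 2 := min_le_right _ _
  nlinarith [hmid, hf2nn, hf'2nn]
end

section
/- Let d = 1, α > 0, V(x) = (α/2) x², and k(x,y) = xy. Let ρ be a probability measure on ℝ with finite second moment. Then the curvature kernel q[ρ](y,z) = [∫ ∂_x( e^{−V(x)} x y ) e^{V(x)} dρ(x)] · ∂_y(yz) − [∫ ∂_y ∂_x( e^{−V(x)} x y ) e^{V(x)} dρ(x)] · yz − ∫ ∂_x( e^{V(x)} ∂_x( e^{−V(x)} x y ) ) x z dρ(x) satisfies q[ρ](y,z) = 2α yz ∫_ℝ x² dρ(x) for all y, z ∈ ℝ. Consequently, for every smooth Ψ, Σ ∫∫ Ψ'(y) q[ρ](y,z) Ψ'(z) dρ(y) dρ(z) = 2α (∫ x² dρ) ∫∫ Ψ'(y) k(y,z) Ψ'(z) dρ(y) dρ(z), so the curvature lower bound holds with λ = 2α ∫ x² dρ(x). -/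
open MeasureTheory Real

lemma hdA (α y x : ℝ) :
    HasDerivAt (fun x' => exp (-(α / 2 * x' ^ 2)) * (x' * y))
      (exp (-(α / 2 * x ^ 2)) * (y - α * x ^ 2 * y)) x := by
  have h0 : HasDerivAt (fun x' : ℝ => -(α / 2 * x' ^ 2)) (-(α * x)) x := by
    have h : HasDerivAt (fun x' : ℝ => -(α / 2 * x' ^ 2)) _ x := ((hasDerivAt_pow 2 x).const_mul (α / 2)).neg
    convert h using 1
    push_cast; ring
  have h2 : HasDerivAt (fun x' : ℝ => x' * y) y x := by
    simpa using (hasDerivAt_id x).mul_const y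
  have : HasDerivAt (fun x' => exp (-(α / 2 * x' ^ 2)) * (x' * y)) _ x := h0.exp.mul h2
  convert this using 1
  ring

lemma dA (α y x : ℝ) :
    deriv (fun x' => exp (-(α / 2 * x' ^ 2)) * (x' * y)) x
      = exp (-(α / 2 * x ^ 2)) * (y - α * x ^ 2 * y) := (hdA α y x).deriv

lemma dB (α y x : ℝ) :
    deriv (fun y' => deriv (fun x' => exp (-(α / 2 * x' ^ 2)) * (x' * y')) x) y
      = exp (-(α / 2 * x ^ 2)) * (1 - α * x ^ 2) := by
  have hfun : (fun y' => deriv (fun x' => exp (-(α / 2 * x' ^ 2)) * (x' * y')) x)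
      = fun y' => exp (-(α / 2 * x ^ 2)) * (y' - α * x ^ 2 * y') := by
    funext y'; exact dA α y' x
  rw [hfun]
  have h : HasDerivAt (fun y' : ℝ => exp (-(α / 2 * x ^ 2)) * (y' - α * x ^ 2 * y'))
      (exp (-(α / 2 * x ^ 2)) * (1 - α * x ^ 2)) y := by
    have h1 : HasDerivAt (fun y' : ℝ => y' - α * x ^ 2 * y') (1 - α * x ^ 2) y := by
      simpa using (show HasDerivAt (fun y' : ℝ => y' - α * x ^ 2 * y') _ y from (hasDerivAt_id y).sub ((hasDerivAt_id y).const_mul (α * x ^ 2)))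
    simpa using h1.const_mul (exp (-(α / 2 * x ^ 2)))
  exact h.deriv

lemma dC (α y x : ℝ) :
    deriv (fun x' =>
        exp (α / 2 * x' ^ 2) * deriv (fun x'' => exp (-(α / 2 * x'' ^ 2)) * (x'' * y)) x') x
      = -(2 * α * x * y) := by
  have hfun : (fun x' =>
      exp (α / 2 * x' ^ 2) * deriv (fun x'' => exp (-(α / 2 * x'' ^ 2)) * (x'' * y)) x')
      = fun x' => y - α * x' ^ 2 * y := by
    funext x'
    rw [dA, ← mul_assoc, ← exp_add]
    ring_nf
    simp
  rw [hfun]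
  have h : HasDerivAt (fun x' : ℝ => y - α * x' ^ 2 * y) (-(2 * α * x * y)) x := by
    have h1 := ((hasDerivAt_pow 2 x).const_mul α).mul_const y
    have h2 : HasDerivAt (fun x' : ℝ => y - α * x' ^ 2 * y) _ x := (hasDerivAt_const x y).sub h1
    convert h2 using 1
    push_cast; ring
  exact h.deriv

/-- polynomial kernel, Gaussian target, `d = 1`. For
`V(x) = (α/2)x²` and `k(x,y) = xy`, the curvature kernel satisfies
`q[ρ](y,z) = 2α yz ∫ x² dρ`, so the curvature lower bound holds with
`λ = 2α ∫ x² dρ`. -/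
theorem stmt_14 (α : ℝ) (hα : 0 < α)
    (ρ : Measure ℝ) [IsProbabilityMeasure ρ]
    (hmom : Integrable (fun x => x ^ 2) ρ)
    (q : ℝ → ℝ → ℝ)
    (hq : ∀ y z, q y z =
      (∫ x, deriv (fun x' => exp (-(α / 2 * x' ^ 2)) * (x' * y)) x * exp (α / 2 * x ^ 2) ∂ρ)
          * deriv (fun y' => y' * z) y
        - (∫ x, deriv (fun y' => deriv (fun x' => exp (-(α / 2 * x' ^ 2)) * (x' * y')) x) y
              * exp (α / 2 * x ^ 2) ∂ρ) * (y * z)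
        - ∫ x, deriv (fun x' =>
              exp (α / 2 * x' ^ 2) * deriv (fun x'' => exp (-(α / 2 * x'' ^ 2)) * (x'' * y)) x') x
            * (x * z) ∂ρ) :
    -- `q[ρ](y,z) = 2α yz ∫ x² dρ`
    (∀ y z, q y z = 2 * α * (y * z) * ∫ x, x ^ 2 ∂ρ)
    -- hence for every smooth `Ψ` the Hessian form equals `λ` times the metric term,
    -- and in particular the curvature lower bound holds with `λ = 2α ∫ x² dρ`
    ∧ ∀ Ψ : ℝ → ℝ, ContDiff ℝ (⊤ : ℕ∞) Ψ →
        (∫ y, (∫ z, deriv Ψ y * q y z * deriv Ψ z ∂ρ) ∂ρ)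
            = (2 * α * ∫ x, x ^ 2 ∂ρ) * ∫ y, (∫ z, deriv Ψ y * (y * z) * deriv Ψ z ∂ρ) ∂ρ
          ∧ (2 * α * ∫ x, x ^ 2 ∂ρ) * ∫ y, (∫ z, deriv Ψ y * (y * z) * deriv Ψ z ∂ρ) ∂ρ
              ≤ ∫ y, (∫ z, deriv Ψ y * q y z * deriv Ψ z ∂ρ) ∂ρ := by
  set M := ∫ x, x ^ 2 ∂ρ with hM
  have key : ∀ y z, q y z = 2 * α * (y * z) * M := by
    intro y z
    rw [hq]
    -- first integrand
    have e1 : ∀ y' : ℝ, (fun x => deriv (fun x' => exp (-(α / 2 * x' ^ 2)) * (x' * y')) x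
        * exp (α / 2 * x ^ 2)) = fun x => y' - α * x ^ 2 * y' := by
      intro y'; funext x
      rw [dA, mul_assoc, mul_comm (y' - α * x ^ 2 * y'), ← mul_assoc, ← exp_add]
      ring_nf
      simp
    have e2 : (fun x => deriv (fun y' => deriv
        (fun x' => exp (-(α / 2 * x' ^ 2)) * (x' * y')) x) y * exp (α / 2 * x ^ 2))
        = fun x : ℝ => 1 - α * x ^ 2 := by
      funext x
      rw [dB, mul_assoc, mul_comm (1 - α * x ^ 2), ← mul_assoc, ← exp_add]
      ring_nf
      simp
      ring
    have e3 : (fun x => deriv (fun x' =>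
        exp (α / 2 * x' ^ 2) * deriv (fun x'' => exp (-(α / 2 * x'' ^ 2)) * (x'' * y)) x') x
        * (x * z)) = fun x : ℝ => -(2 * α * y * z) * x ^ 2 := by
      funext x
      rw [dC]; ring
    rw [e1 y, e2, e3]
    have i1 : ∀ c : ℝ, (∫ x, (c - α * x ^ 2 * c) ∂ρ) = c - α * c * M := by
      intro c
      have hrw : (fun x : ℝ => c - α * x ^ 2 * c) = fun x => c - (α * c) * x ^ 2 := by
        funext x; ring
      rw [hrw, integral_sub (integrable_const c) (hmom.const_mul (α * c)),
        integral_const, integral_const_mul]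
      simp [hM]
    have i2 : (∫ x, (1 - α * x ^ 2) ∂ρ) = 1 - α * M := by
      have := i1 1
      simpa using this
    rw [i1 y, i2, integral_const_mul]
    have hd : deriv (fun y' => y' * z) y = z := by
      simpa using ((hasDerivAt_id y).mul_const z).deriv
    rw [hd]
    ring
  refine ⟨key, fun Ψ _ => ?_⟩
  have hin : (∫ y, (∫ z, deriv Ψ y * q y z * deriv Ψ z ∂ρ) ∂ρ)
      = (2 * α * M) * ∫ y, (∫ z, deriv Ψ y * (y * z) * deriv Ψ z ∂ρ) ∂ρ := by
    rw [← integral_const_mul]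
    congr 1; funext y
    rw [← integral_const_mul]
    congr 1; funext z
    rw [key]; ring
  exact ⟨hin, le_of_eq hin.symm⟩
end
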